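/- Let p be a prime, a, d ∈ integers with a ≢ d mod p, and O an m×n integer matrix with O[s]·O[t] ≡ w·d mod p for s ≠ t and O[s]·O[s] ≡ a − d + w·d mod p, where p | w. Let F be a field of characteristic p with s₀² = d−a (image in F), s₀ ≠ 0. Then the rows of A = [s₀·I_m | O] span a self-orthogonal code over F of length m+n and dimension m; if m = n the code is self-dual. -/

import Mathlib

open Matrix Finset

/-- The dot product as a bilinear form. -/
noncomputable def dotBilin (F : Type*) [Field F] (ι : Type*) [Fintype ι] :
    LinearMap.BilinForm F (ι → F) :=
  LinearMap.mk₂ F (· ⬝ᵥ ·) (fun x y z => add_dotProduct x y z)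
    (fun c x y => by simp [smul_dotProduct, smul_eq_mul])
    (fun x y z => dotProduct_add x y z)
    (fun c x y => by simp [dotProduct_smul, smul_eq_mul])

theorem dotBilin_apply {F : Type*} [Field F] {ι : Type*} [Fintype ι] (x y : ι → F) :
    dotBilin F ι x y = x ⬝ᵥ y := rfl

theorem dotBilin_refl {F : Type*} [Field F] {ι : Type*} [Fintype ι] :
    (dotBilin F ι).IsRefl := by
  intro x y h
  rw [dotBilin_apply] at h ⊢
  rw [dotProduct_comm]
  exact h

theorem dotBilin_nondegenerate {F : Type*} [Field F] {ι : Type*} [Fintype ι] [DecidableEq ι] :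
    (dotBilin F ι).Nondegenerate := by
  refine (LinearMap.IsRefl.nondegenerate_iff_separatingLeft (B := dotBilin F ι) (fun x y h => dotBilin_refl x y h)).2 ?_
  intro x hx
  ext i
  have := hx (Pi.single i 1)
  rwa [dotBilin_apply, dotProduct_single, mul_one] at this

/-- If an integer matrix O satisfies O[s]·O[t] ≡ w·d mod p for s ≠ t and
O[s]·O[s] ≡ a − d + w·d mod p, with p prime, a ≢ d mod p, p ∣ w, and F of
characteristic p contains s₀ ≠ 0 with s₀² = d − a, then the rows of A = [s₀·I_m | O]
span a self-orthogonal code of length m+n and dimension m; if m = n it is self-dual. -/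
theorem stmt16 {F : Type*} [Field F] (p : ℕ) (hp : p.Prime) [CharP F p]
    (m n : ℕ) (a d w : ℤ) (O : Matrix (Fin m) (Fin n) ℤ)
    (had : ¬ a ≡ d [ZMOD p])
    (hst : ∀ s t : Fin m, s ≠ t → O s ⬝ᵥ O t ≡ w * d [ZMOD p])
    (hss : ∀ s : Fin m, O s ⬝ᵥ O s ≡ a - d + w * d [ZMOD p])
    (hpw : (p : ℤ) ∣ w)
    (s₀ : F) (hs₀ : s₀ ^ 2 = ((d - a : ℤ) : F)) (hs0 : s₀ ≠ 0)
    (A : Fin m → (Fin m ⊕ Fin n) → F)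
    (hA : A = fun i => Sum.elim (fun i' => if i = i' then s₀ else 0)
      (fun j => ((O i j : ℤ) : F))) :
    (∀ x ∈ Submodule.span F (Set.range A),
      ∀ y ∈ Submodule.span F (Set.range A), x ⬝ᵥ y = 0) ∧
    Module.finrank F (Submodule.span F (Set.range A)) = m ∧
    (m = n → ∀ z : (Fin m ⊕ Fin n) → F,
      z ∈ Submodule.span F (Set.range A) ↔
        ∀ y ∈ Submodule.span F (Set.range A), z ⬝ᵥ y = 0) := by
  -- casting congruences to F
  have cast_eq : ∀ x y : ℤ, x ≡ y [ZMOD p] → ((x : F) = (y : F)) := by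
    intro x y h
    have hd : (p : ℤ) ∣ y - x := h.dvd
    have : ((y - x : ℤ) : F) = 0 := (CharP.intCast_eq_zero_iff F p _).2 hd
    push_cast at this
    exact (sub_eq_zero.mp this).symm
  have hwd : ((w * d : ℤ) : F) = 0 :=
    (CharP.intCast_eq_zero_iff F p _).2 (hpw.mul_right d)
  -- the key orthogonality of rows
  have key : ∀ s t : Fin m, A s ⬝ᵥ A t = 0 := by
    intro s t
    subst hA
    rw [dotProduct, Fintype.sum_sum_type]
    simp only [Sum.elim_inl, Sum.elim_inr]
    have h2 : (∑ j, ((O s j : ℤ) : F) * ((O t j : ℤ) : F)) = ((O s ⬝ᵥ O t : ℤ) : F) := by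
      rw [dotProduct]
      push_cast
      rfl
    rw [h2]
    by_cases hstt : s = t
    · subst hstt
      have h1 : (∑ i' : Fin m, (if s = i' then s₀ else 0) * (if s = i' then s₀ else 0))
          = s₀ ^ 2 := by
        rw [Finset.sum_eq_single s]
        · simp [sq]
        · intro b _ hb; simp [Ne.symm hb]
        · simp
      have e : ((a - d + w * d : ℤ) : F) = -((d - a : ℤ) : F) := by
        rw [show (a - d + w * d : ℤ) = -(d - a) + w * d by ring, Int.cast_add, hwd,
          add_zero, Int.cast_neg]
      rw [h1, cast_eq _ _ (hss s), e, hs₀]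
      ring
    · have h1 : (∑ i' : Fin m, (if s = i' then s₀ else 0) * (if t = i' then s₀ else 0)) = 0 := by
        apply Finset.sum_eq_zero
        intro i' _
        by_cases h : s = i'
        · subst h
          rw [if_pos rfl, if_neg (fun h' : t = s => hstt h'.symm), mul_zero]
        · rw [if_neg h, zero_mul]
      rw [h1, cast_eq _ _ (hst s t hstt), hwd, zero_add]
  set W := Submodule.span F (Set.range A) with hW
  -- part 1 : self-orthogonality
  have part1 : ∀ x ∈ W, ∀ y ∈ W, x ⬝ᵥ y = 0 := by
    have h1 : ∀ i : Fin m, ∀ x ∈ W, x ⬝ᵥ A i = 0 := by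
      intro i x hx
      induction hx using Submodule.span_induction with
      | mem x hx => obtain ⟨j, rfl⟩ := hx; exact key j i
      | zero => simp
      | add x y _ _ hx hy => rw [add_dotProduct, hx, hy, add_zero]
      | smul c x _ hx => rw [smul_dotProduct, hx, smul_zero]
    intro x hx y hy
    induction hy using Submodule.span_induction with
    | mem y hy => obtain ⟨j, rfl⟩ := hy; exact h1 j x hx
    | zero => simp
    | add y z _ _ hy hz => rw [dotProduct_add, hy, hz, add_zero]
    | smul c y _ hy => rw [dotProduct_smul, hy, smul_zero]
  -- linear independence
  have li : LinearIndependent F A := by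
    rw [Fintype.linearIndependent_iff]
    intro g hg i
    have := congrFun hg (Sum.inl i)
    simp only [Finset.sum_apply, Pi.smul_apply, hA, Sum.elim_inl, smul_eq_mul,
      Pi.zero_apply] at this
    rw [Finset.sum_eq_single i (by intro b _ hb; simp [hb]) (by simp)] at this
    simp only [if_pos rfl] at this
    exact (mul_eq_zero.1 this).resolve_right hs0
  have hrank : Module.finrank F W = m := by
    rw [hW, finrank_span_eq_card li, Fintype.card_fin]
  refine ⟨part1, hrank, ?_⟩
  -- self-duality when m = n
  intro hmn z
  have hV : Module.finrank F ((Fin m ⊕ Fin n) → F) = m + n := by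
    simp [Module.finrank_fintype_fun_eq_card]
  have hle : W ≤ (dotBilin F (Fin m ⊕ Fin n)).orthogonal W := by
    intro x hx
    rw [LinearMap.BilinForm.mem_orthogonal_iff]
    intro y hy
    exact part1 y hy x hx
  have horth : (dotBilin F (Fin m ⊕ Fin n)).orthogonal W = W := by
    symm
    apply Submodule.eq_of_le_of_finrank_eq hle
    rw [LinearMap.BilinForm.finrank_orthogonal dotBilin_nondegenerate, hV, hrank]
    omega
  constructor
  · intro hz y hy
    exact part1 z hz y hy
  · intro hz
    rw [← horth, LinearMap.BilinForm.mem_orthogonal_iff]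
    intro y hy
    show dotBilin F _ y z = 0
    rw [dotBilin_apply, dotProduct_comm]
    exact hz y hy
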